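/- Let q₀, q₁ be probability densities on (S,ν) with h²(q₀,q₁) = 1 − cos α for α ∈ (0, π/2), λ ∈ (0,1/4), and q₂ as above. Then λ² h²(q₀,q₁) ≤ h²(q₁,q₂) ≤ h²(q₀,q₁) and (1−λ)² h²(q₀,q₁) ≤ h²(q₀,q₂). -/

import Mathlib

open MeasureTheory Real

lemma integral_combo {S : Type*} [MeasurableSpace S] (ν : Measure S)
    (f g : S → ℝ) (c d : ℝ)
    (hf2 : Integrable (fun s => f s ^ 2) ν) (hg2 : Integrable (fun s => g s ^ 2) ν)
    (hfg : Integrable (fun s => f s * g s) ν) :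
    ∫ s, (c * f s + d * g s) ^ 2 ∂ν
      = c ^ 2 * ∫ s, f s ^ 2 ∂ν + d ^ 2 * ∫ s, g s ^ 2 ∂ν
        + 2 * c * d * ∫ s, f s * g s ∂ν := by
  have hA : Integrable (fun s => 2 * c * d * (f s * g s) + d ^ 2 * (g s ^ 2)) ν :=
    (hfg.const_mul _).add (hg2.const_mul _)
  rw [show (fun s => (c * f s + d * g s) ^ 2)
      = fun s => c ^ 2 * (f s ^ 2) + (2 * c * d * (f s * g s) + d ^ 2 * (g s ^ 2)) from
    funext fun s => by ring]
  rw [integral_add (hf2.const_mul _) hA,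
    integral_add (hfg.const_mul _) (hg2.const_mul _),
    integral_const_mul, integral_const_mul, integral_const_mul]
  ring

lemma trig_key (α t : ℝ) (hs : Real.sin α ≠ 0) :
    (1 / 2) * ((1 - Real.sin (α - t) / Real.sin α) ^ 2 * 1 + (Real.sin t / Real.sin α) ^ 2 * 1
      + 2 * (1 - Real.sin (α - t) / Real.sin α) * (-(Real.sin t / Real.sin α)) * Real.cos α)
      = 1 - Real.cos t := by
  have h1 := Real.sin_sq_add_cos_sq t
  have h2 := Real.sin_sq_add_cos_sq α
  rw [Real.sin_sub]
  field_simp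
  linear_combination (Real.sin α ^ 2 - Real.sin α ^ 2 * Real.cos α ^ 2 + Real.sin α ^ 2 - Real.sin α ^ 4) * h1
    + (- Real.sin α ^ 2 * (1 - Real.cos t ^ 2) + Real.sin α ^ 2 * Real.sin t ^ 2 - Real.sin t ^ 2) * h2

lemma concave_bound {α t : ℝ} (hα0 : 0 < α) (hαπ : α < π) (ht0 : 0 ≤ t) (ht1 : t ≤ 1) :
    t ^ 2 * (1 - Real.cos α) ≤ 1 - Real.cos (t * α) := by
  have hsin : t * Real.sin (α / 2) ≤ Real.sin (t * (α / 2)) := by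
    have hc := strictConcaveOn_sin_Icc.concaveOn.2
      (show (0:ℝ) ∈ Set.Icc 0 π from Set.mem_Icc.2 ⟨le_rfl, Real.pi_pos.le⟩)
      (show α / 2 ∈ Set.Icc 0 π from Set.mem_Icc.2 ⟨by linarith, by linarith⟩)
      (show (0:ℝ) ≤ 1 - t by linarith) ht0 (by ring)
    simpa [smul_eq_mul] using hc
  have h1 : 1 - Real.cos α = 2 * Real.sin (α / 2) ^ 2 := by
    have := Real.sin_sq_eq_half_sub (α / 2)
    rw [show 2 * (α / 2) = α by ring] at this
    linarith
  have h2 : 1 - Real.cos (t * α) = 2 * Real.sin (t * (α / 2)) ^ 2 := by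
    have := Real.sin_sq_eq_half_sub (t * (α / 2))
    rw [show 2 * (t * (α / 2)) = t * α by ring] at this
    linarith
  have hsnn : 0 ≤ Real.sin (α / 2) := Real.sin_nonneg_of_nonneg_of_le_pi (by linarith) (by linarith)
  have hsq : (t * Real.sin (α / 2)) ^ 2 ≤ Real.sin (t * (α / 2)) ^ 2 := by
    apply sq_le_sq' <;> nlinarith
  rw [h1, h2]
  nlinarith [hsq]

/-- Comparison of Hellinger distances:
`λ² h²(q₀,q₁) ≤ h²(q₁,q₂) ≤ h²(q₀,q₁)` and `(1-λ)² h²(q₀,q₁) ≤ h²(q₀,q₂)`. -/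
theorem hellinger_least_favorable_comparison
    {S : Type*} [MeasurableSpace S] (ν : Measure S)
    (q0 q1 : S → ℝ)
    (h0 : ∀ s, 0 ≤ q0 s) (h1 : ∀ s, 0 ≤ q1 s)
    (hi0 : Integrable q0 ν) (hi1 : Integrable q1 ν)
    (hm0 : ∫ s, q0 s ∂ν = 1) (hm1 : ∫ s, q1 s ∂ν = 1)
    (α l : ℝ) (hα : α ∈ Set.Ioo 0 (π / 2)) (hl : l ∈ Set.Ioo 0 (1 / 4 : ℝ))
    (hHell : (1 / 2) * ∫ s, (Real.sqrt (q0 s) - Real.sqrt (q1 s)) ^ 2 ∂ν = 1 - Real.cos α)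
    (q2 : S → ℝ)
    (hq2 : q2 = fun s =>
      (Real.sin ((1 - l) * α) / Real.sin α * Real.sqrt (q1 s)
        + Real.sin (l * α) / Real.sin α * Real.sqrt (q0 s)) ^ 2) :
    (l ^ 2 * ((1 / 2) * ∫ s, (Real.sqrt (q0 s) - Real.sqrt (q1 s)) ^ 2 ∂ν)
        ≤ (1 / 2) * ∫ s, (Real.sqrt (q1 s) - Real.sqrt (q2 s)) ^ 2 ∂ν) ∧
    ((1 / 2) * (∫ s, (Real.sqrt (q1 s) - Real.sqrt (q2 s)) ^ 2 ∂ν)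
        ≤ (1 / 2) * ∫ s, (Real.sqrt (q0 s) - Real.sqrt (q1 s)) ^ 2 ∂ν) ∧
    ((1 - l) ^ 2 * ((1 / 2) * ∫ s, (Real.sqrt (q0 s) - Real.sqrt (q1 s)) ^ 2 ∂ν)
        ≤ (1 / 2) * ∫ s, (Real.sqrt (q0 s) - Real.sqrt (q2 s)) ^ 2 ∂ν) := by
  obtain ⟨hα0, hα2⟩ := hα
  obtain ⟨hl0, hl4⟩ := hl
  have hπ := Real.pi_pos
  have hsinα : 0 < Real.sin α := Real.sin_pos_of_pos_of_lt_pi hα0 (by linarith)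
  have hs : Real.sin α ≠ 0 := hsinα.ne'
  -- integrability of squares
  have hf2 : Integrable (fun s => Real.sqrt (q0 s) ^ 2) ν := by
    rw [show (fun s => Real.sqrt (q0 s) ^ 2) = q0 from funext fun s => Real.sq_sqrt (h0 s)]
    exact hi0
  have hg2 : Integrable (fun s => Real.sqrt (q1 s) ^ 2) ν := by
    rw [show (fun s => Real.sqrt (q1 s) ^ 2) = q1 from funext fun s => Real.sq_sqrt (h1 s)]
    exact hi1
  have i0 : ∫ s, Real.sqrt (q0 s) ^ 2 ∂ν = 1 := by
    rw [show (fun s => Real.sqrt (q0 s) ^ 2) = q0 from funext fun s => Real.sq_sqrt (h0 s)]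
    exact hm0
  have i1 : ∫ s, Real.sqrt (q1 s) ^ 2 ∂ν = 1 := by
    rw [show (fun s => Real.sqrt (q1 s) ^ 2) = q1 from funext fun s => Real.sq_sqrt (h1 s)]
    exact hm1
  have hsm0 : AEStronglyMeasurable (fun s => Real.sqrt (q0 s)) ν :=
    Real.continuous_sqrt.comp_aestronglyMeasurable hi0.aestronglyMeasurable
  have hsm1 : AEStronglyMeasurable (fun s => Real.sqrt (q1 s)) ν :=
    Real.continuous_sqrt.comp_aestronglyMeasurable hi1.aestronglyMeasurable
  have hfg : Integrable (fun s => Real.sqrt (q1 s) * Real.sqrt (q0 s)) ν := by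
    refine Integrable.mono' ((hi0.add hi1).const_mul (1 / 2)) (hsm1.mul hsm0)
      (ae_of_all _ fun s => ?_)
    rw [Real.norm_eq_abs,
      abs_of_nonneg (mul_nonneg (Real.sqrt_nonneg _) (Real.sqrt_nonneg _))]
    simp only [Pi.add_apply]
    nlinarith [sq_nonneg (Real.sqrt (q0 s) - Real.sqrt (q1 s)), Real.sq_sqrt (h0 s),
      Real.sq_sqrt (h1 s)]
  have hfg' : Integrable (fun s => Real.sqrt (q0 s) * Real.sqrt (q1 s)) ν := by
    rw [show (fun s => Real.sqrt (q0 s) * Real.sqrt (q1 s))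
        = fun s => Real.sqrt (q1 s) * Real.sqrt (q0 s) from funext fun s => mul_comm _ _]
    exact hfg
  -- value of cross integral
  have hIfg : ∫ s, Real.sqrt (q1 s) * Real.sqrt (q0 s) ∂ν = Real.cos α := by
    rw [show (fun s => (Real.sqrt (q0 s) - Real.sqrt (q1 s)) ^ 2)
        = fun s => ((-1) * Real.sqrt (q1 s) + 1 * Real.sqrt (q0 s)) ^ 2 from
      funext fun s => by ring] at hHell
    rw [integral_combo ν _ _ (-1) 1 hg2 hf2 hfg, i0, i1] at hHell
    norm_num at hHell
    linarith
  have hIfg' : ∫ s, Real.sqrt (q0 s) * Real.sqrt (q1 s) ∂ν = Real.cos α := by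
    rw [show (fun s => Real.sqrt (q0 s) * Real.sqrt (q1 s))
        = fun s => Real.sqrt (q1 s) * Real.sqrt (q0 s) from funext fun s => mul_comm _ _]
    exact hIfg
  -- positivity of sines
  have hsl : 0 < Real.sin (l * α) :=
    Real.sin_pos_of_pos_of_lt_pi (mul_pos hl0 hα0) (by nlinarith)
  have hs1l : 0 < Real.sin ((1 - l) * α) :=
    Real.sin_pos_of_pos_of_lt_pi (mul_pos (by linarith) hα0) (by nlinarith)
  -- square root of q2
  have hq2sqrt : ∀ s, Real.sqrt (q2 s)
      = Real.sin ((1 - l) * α) / Real.sin α * Real.sqrt (q1 s)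
        + Real.sin (l * α) / Real.sin α * Real.sqrt (q0 s) := by
    intro s
    simp only [hq2]
    exact Real.sqrt_sq (add_nonneg
      (mul_nonneg (div_pos hs1l hsinα).le (Real.sqrt_nonneg _))
      (mul_nonneg (div_pos hsl hsinα).le (Real.sqrt_nonneg _)))
  -- h²(q1,q2)
  have hv1 : (1 / 2) * ∫ s, (Real.sqrt (q1 s) - Real.sqrt (q2 s)) ^ 2 ∂ν
      = 1 - Real.cos (l * α) := by
    rw [show (fun s => (Real.sqrt (q1 s) - Real.sqrt (q2 s)) ^ 2)
        = fun s => ((1 - Real.sin ((1 - l) * α) / Real.sin α) * Real.sqrt (q1 s)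
            + (-(Real.sin (l * α) / Real.sin α)) * Real.sqrt (q0 s)) ^ 2 from
      funext fun s => by rw [hq2sqrt s]; ring]
    rw [integral_combo ν _ _ _ _ hg2 hf2 hfg, i0, i1, hIfg,
      show (1 - l) * α = α - l * α by ring]
    linear_combination trig_key α (l * α) hs
  -- h²(q0,q2)
  have hv0 : (1 / 2) * ∫ s, (Real.sqrt (q0 s) - Real.sqrt (q2 s)) ^ 2 ∂ν
      = 1 - Real.cos ((1 - l) * α) := by
    rw [show (fun s => (Real.sqrt (q0 s) - Real.sqrt (q2 s)) ^ 2)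
        = fun s => ((1 - Real.sin (l * α) / Real.sin α) * Real.sqrt (q0 s)
            + (-(Real.sin ((1 - l) * α) / Real.sin α)) * Real.sqrt (q1 s)) ^ 2 from
      funext fun s => by rw [hq2sqrt s]; ring]
    rw [integral_combo ν _ _ _ _ hf2 hg2 hfg', i0, i1, hIfg',
      show l * α = α - (1 - l) * α by ring]
    linear_combination trig_key α ((1 - l) * α) hs
  rw [hHell, hv1, hv0]
  refine ⟨?_, ?_, ?_⟩
  · exact concave_bound hα0 (by linarith) hl0.le (by linarith)
  · have := Real.cos_le_cos_of_nonneg_of_le_pi (x := l * α) (y := α)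
      (mul_pos hl0 hα0).le (by linarith) (by nlinarith)
    linarith
  · exact concave_bound hα0 (by linarith) (by linarith) (by linarith)
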